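/- For k ≥ 3, the k×k real symmetric matrix M with entries M_{ab} = (2/k)·cos(π(a−b)/k) for a,b ∈ {0,…,k−1} satisfies M² = M, i.e., M is a projection matrix. -/

import Mathlib

open Real

lemma sum_cos_shift_zero (k : ℕ) (hk : 2 ≤ k) (θ : ℝ) :
    ∑ c : Fin k, Real.cos (θ - 2 * π * (c : ℝ) / k) = 0 := by
  have hk0 : (k : ℝ) ≠ 0 := by positivity
  set z : ℂ := Complex.exp (-(2 * π / k) * Complex.I) with hz
  have hzk : z ^ k = 1 := by
    rw [hz, ← Complex.exp_nat_mul]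
    have hkC : (k : ℂ) ≠ 0 := Nat.cast_ne_zero.mpr (by omega)
    have : (k : ℂ) * (-(2 * π / k) * Complex.I) = -(2 * π * Complex.I) := by
      field_simp
    rw [this, ← Complex.exp_int_mul_two_pi_mul_I (-1)]
    push_cast
    ring_nf
  have hz1 : z ≠ 1 := by
    intro h
    rw [hz, Complex.exp_eq_one_iff] at h
    obtain ⟨n, hn⟩ := h
    have hI : (Complex.I : ℂ) ≠ 0 := Complex.I_ne_zero
    have h2 : (-(2 * π / k) : ℂ) = n * (2 * π) := by
      apply mul_right_cancel₀ hI
      rw [hn]; ring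
    have h3 : (-(2 * π / k) : ℝ) = n * (2 * π) := by
      exact_mod_cast h2
    have hπ : (π : ℝ) ≠ 0 := Real.pi_ne_zero
    have h4 : (n : ℝ) * k = -1 := by
      field_simp at h3
      have h6 : ((n:ℝ) * k + 1) * (2 * π) = 0 := by linear_combination (-(2 * π)) * h3
      rcases mul_eq_zero.mp h6 with h | h
      · linarith
      · exact absurd h (by positivity)
    have h5 : (n * k : ℤ) = -1 := by exact_mod_cast h4
    have : (k : ℤ) ∣ 1 := ⟨-n, by linarith [h5]⟩
    have := Int.le_of_dvd one_pos this
    omega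
  have hsum : ∑ c : Fin k, z ^ (c : ℕ) = 0 := by
    rw [Fin.sum_univ_eq_sum_range fun i => z ^ i]
    rw [geom_sum_eq hz1, hzk]
    simp
  have hC : ∑ c : Fin k, Complex.exp (((θ - 2 * π * (c : ℝ) / k : ℝ)) * Complex.I) = 0 := by
    have : ∀ c : Fin k, Complex.exp (((θ - 2 * π * (c : ℝ) / k : ℝ)) * Complex.I)
        = Complex.exp ((θ : ℝ) * Complex.I) * z ^ (c : ℕ) := by
      intro c
      rw [hz, ← Complex.exp_nat_mul, ← Complex.exp_add]
      congr 1
      push_cast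
      field_simp
      ring
    simp only [this, ← Finset.mul_sum, hsum, mul_zero]
  have h := congrArg Complex.re hC
  rw [Complex.re_sum] at h
  simp only [Complex.exp_ofReal_mul_I_re] at h
  convert h using 2
  simp

theorem chained_matrix_is_projection (k : ℕ) (hk : 3 ≤ k)
    (M : Matrix (Fin k) (Fin k) ℝ)
    (hM : ∀ a b : Fin k, M a b = (2 / (k : ℝ)) * Real.cos (π * ((a : ℝ) - (b : ℝ)) / k)) :
    M * M = M := by
  have hk0 : (k : ℝ) ≠ 0 := by positivity
  have hk2 : 2 ≤ k := by omega
  ext a b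
  rw [Matrix.mul_apply, hM a b]
  have key : ∀ c : Fin k, M a c * M c b
      = (2 / (k:ℝ))^2 * (1/2) * (Real.cos (π * ((a:ℝ) - b) / k)
        + Real.cos (π * ((a:ℝ) + b) / k - 2 * π * (c:ℝ) / k)) := by
    intro c
    rw [hM a c, hM c b]
    have hcc : ∀ x y : ℝ, Real.cos x * Real.cos y
        = (1/2) * (Real.cos (x + y) + Real.cos (x - y)) := by
      intro x y
      rw [Real.cos_add, Real.cos_sub]
      ring
    rw [mul_mul_mul_comm, hcc]
    have h1 : π * ((a:ℝ) - c) / k + π * ((c:ℝ) - b) / k = π * ((a:ℝ) - b) / k := by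
      field_simp; ring
    have h2 : π * ((a:ℝ) - c) / k - π * ((c:ℝ) - b) / k
        = π * ((a:ℝ) + b) / k - 2 * π * (c:ℝ) / k := by
      field_simp; ring
    rw [h1, h2]
    ring
  simp only [key]
  rw [← Finset.mul_sum]
  rw [Finset.sum_add_distrib, sum_cos_shift_zero k hk2 (π * ((a:ℝ) + b) / k)]
  simp only [Finset.sum_const, Finset.card_univ, Fintype.card_fin, nsmul_eq_mul, add_zero]
  field_simp
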